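/- There is exactly one α > 0 such that α³·Φ(α) = (1 − α²)·φ(α); moreover this unique solution lies in the interval (0.638, 0.639). -/

import Mathlib

open MeasureTheory

/-- Density of the standard normal distribution. -/
noncomputable def stdPdf (x : ℝ) : ℝ := (Real.sqrt (2 * Real.pi))⁻¹ * Real.exp (-x ^ 2 / 2)

/-- Cumulative distribution function of the standard normal distribution. -/
noncomputable def stdCdf (x : ℝ) : ℝ := ∫ u in Set.Iic x, stdPdf u


open Real Set

lemma stdPdf_eq (x : ℝ) : stdPdf x = (Real.sqrt (2 * Real.pi))⁻¹ * Real.exp (-(1/2) * x ^ 2) := by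
  rw [stdPdf]; ring_nf

lemma stdPdf_cont : Continuous stdPdf := by
  unfold stdPdf; fun_prop

lemma stdPdf_integrable : Integrable stdPdf := by
  have : stdPdf = fun x => (Real.sqrt (2 * Real.pi))⁻¹ * Real.exp (-(1/2) * x ^ 2) := funext stdPdf_eq
  rw [this]
  exact (integrable_exp_neg_mul_sq (by norm_num)).const_mul _

lemma stdPdf_pos (x : ℝ) : 0 < stdPdf x := by
  unfold stdPdf
  positivity

lemma stdPdf_total : ∫ x, stdPdf x = 1 := by
  simp_rw [stdPdf_eq]
  rw [integral_const_mul, integral_gaussian]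
  rw [inv_mul_eq_one₀ (by positivity)]
  norm_num
  exact mul_comm _ _



lemma stdCdf_nonneg (x : ℝ) : 0 ≤ stdCdf x :=
  setIntegral_nonneg measurableSet_Iic (fun y _ => (stdPdf_pos y).le)

lemma stdCdf_zero : stdCdf 0 = 1/2 := by
  have heven : ∀ x : ℝ, stdPdf (-x) = stdPdf x := by
    intro x; unfold stdPdf; rw [neg_pow]; ring_nf
  have h1 := integral_comp_neg_Iic (0:ℝ) stdPdf
  simp only [heven, neg_zero] at h1
  have h2 : stdCdf 0 + stdCdf 0 = 1 := by
    nth_rewrite 2 [stdCdf]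
    rw [h1]
    rw [stdCdf, intervalIntegral.integral_Iic_add_Ioi stdPdf_integrable.integrableOn
      stdPdf_integrable.integrableOn, stdPdf_total]
  linarith


lemma stdCdf_eq (x : ℝ) : stdCdf x = 1/2 + ∫ u in (0:ℝ)..x, stdPdf u := by
  have := intervalIntegral.integral_Iic_sub_Iic (f := stdPdf) (μ := volume) (a := 0) (b := x)
    stdPdf_integrable.integrableOn stdPdf_integrable.integrableOn
  have h0 : stdCdf 0 = 1/2 := stdCdf_zero
  rw [stdCdf] at h0 ⊢
  linarith [this]

lemma stdCdf_hasDeriv (x : ℝ) : HasDerivAt stdCdf (stdPdf x) x := by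
  have h : HasDerivAt (fun u => ∫ t in (0:ℝ)..u, stdPdf t) (stdPdf x) x :=
    intervalIntegral.integral_hasDerivAt_right
      (stdPdf_cont.intervalIntegrable _ _)
      (stdPdf_cont.stronglyMeasurable.stronglyMeasurableAtFilter)
      stdPdf_cont.continuousAt
  have : stdCdf = fun u => 1/2 + ∫ t in (0:ℝ)..u, stdPdf t := funext stdCdf_eq
  rw [this]
  exact (h.const_add (1/2))

lemma stdPdf_hasDeriv (x : ℝ) : HasDerivAt stdPdf (-x * stdPdf x) x := by
  unfold stdPdf
  have h1 : HasDerivAt (fun y : ℝ => -y ^ 2 / 2) (-x) x := by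
    have := ((hasDerivAt_pow 2 x).neg).div_const 2
    simpa using this.congr_deriv (by ring)
  have h2 := (h1.exp).const_mul (Real.sqrt (2 * Real.pi))⁻¹
  exact h2.congr_deriv (by ring)

noncomputable def F (a : ℝ) : ℝ := a ^ 3 * stdCdf a - (1 - a ^ 2) * stdPdf a

lemma F_hasDeriv (a : ℝ) : HasDerivAt F (3 * a * (a * stdCdf a + stdPdf a)) a := by
  have h1 : HasDerivAt (fun x : ℝ => x ^ 3 * stdCdf x)
      (3 * a ^ 2 * stdCdf a + a ^ 3 * stdPdf a) a := by
    exact ((hasDerivAt_pow 3 a).mul (stdCdf_hasDeriv a)).congr_deriv (by push_cast; ring)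
  have h2 : HasDerivAt (fun x : ℝ => (1 - x ^ 2) * stdPdf x)
      ((-2 * a) * stdPdf a + (1 - a ^ 2) * (-a * stdPdf a)) a := by
    have hp : HasDerivAt (fun x : ℝ => 1 - x ^ 2) (-2 * a) a := by
      exact ((hasDerivAt_pow 2 a).const_sub 1).congr_deriv (by push_cast; ring)
    exact hp.mul (stdPdf_hasDeriv a)
  exact (h1.sub h2).congr_deriv (by ring)

lemma F_strictMono : StrictMonoOn F (Ici 0) := by
  apply strictMonoOn_of_deriv_pos (convex_Ici 0)
  · exact fun x _ => ((F_hasDeriv x).continuousAt).continuousWithinAt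
  · intro x hx
    rw [interior_Ici] at hx
    rw [(F_hasDeriv x).deriv]
    have h1 : 0 ≤ x * stdCdf x := mul_nonneg (le_of_lt hx) (stdCdf_nonneg x)
    have h2 := stdPdf_pos x
    have h3 : 0 < x * stdCdf x + stdPdf x := by linarith
    have hx' : (0:ℝ) < x := hx
    have : (0:ℝ) < 3 * x := by linarith
    exact mul_pos this h3

lemma nonneg_of_deriv {g g' : ℝ → ℝ} (hd : ∀ x, HasDerivAt g (g' x) x) (h0 : g 0 = 0)
    (hpos : ∀ x, 0 ≤ x → 0 ≤ g' x) : ∀ t, 0 ≤ t → 0 ≤ g t := by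
  have hmono : MonotoneOn g (Ici 0) := by
    apply monotoneOn_of_deriv_nonneg (convex_Ici 0)
    · exact fun x _ => ((hd x).continuousAt).continuousWithinAt
    · exact fun x _ => ((hd x).differentiableAt).differentiableWithinAt
    · intro x hx
      rw [interior_Ici] at hx
      rw [(hd x).deriv]
      exact hpos x (le_of_lt hx)
  intro t ht
  calc (0:ℝ) = g 0 := h0.symm
  _ ≤ g t := hmono (le_refl (0:ℝ)) ht ht

lemma exp_ub2 {t : ℝ} (ht : 0 ≤ t) : Real.exp (-t) ≤ 1 - t + t^2/2 := by
  have := nonneg_of_deriv (g := fun t => 1 - t + t^2/2 - Real.exp (-t))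
    (g' := fun t => -1 + t + Real.exp (-t)) ?_ (by norm_num) ?_ t ht
  · linarith
  · intro x
    have h1 : HasDerivAt (fun t : ℝ => 1 - t + t^2/2) (-1 + x) x := by
      have := ((hasDerivAt_id x).const_sub 1).add ((hasDerivAt_pow 2 x).div_const 2)
      exact this.congr_deriv (by push_cast; ring)
    have h2 : HasDerivAt (fun t : ℝ => Real.exp (-t)) (-Real.exp (-x)) x := by
      have := ((hasDerivAt_id x).neg).exp
      exact this.congr_deriv (by simp)
    exact (h1.sub h2).congr_deriv (by ring)
  · intro x hx
    show 0 ≤ -1 + x + Real.exp (-x)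
    have := Real.one_sub_le_exp_neg x
    linarith

lemma exp_lb3 {t : ℝ} (ht : 0 ≤ t) : 1 - t + t^2/2 - t^3/6 ≤ Real.exp (-t) := by
  have := nonneg_of_deriv (g := fun t => Real.exp (-t) - (1 - t + t^2/2 - t^3/6))
    (g' := fun t => -Real.exp (-t) - (-1 + t - t^2/2)) ?_ (by norm_num) ?_ t ht
  · linarith
  · intro x
    have h1 : HasDerivAt (fun t : ℝ => Real.exp (-t)) (-Real.exp (-x)) x := by
      have := ((hasDerivAt_id x).neg).exp
      exact this.congr_deriv (by simp)
    have h2 : HasDerivAt (fun t : ℝ => 1 - t + t^2/2 - t^3/6) (-1 + x - x^2/2) x := by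
      have := (((hasDerivAt_id x).const_sub 1).add ((hasDerivAt_pow 2 x).div_const 2)).sub
        ((hasDerivAt_pow 3 x).div_const 6)
      exact this.congr_deriv (by push_cast; ring)
    exact (h1.sub h2).congr_deriv (by ring)
  · intro x hx
    show 0 ≤ -Real.exp (-x) - (-1 + x - x^2/2)
    have := exp_ub2 hx
    linarith

lemma exp_ub4 {t : ℝ} (ht : 0 ≤ t) : Real.exp (-t) ≤ 1 - t + t^2/2 - t^3/6 + t^4/24 := by
  have := nonneg_of_deriv (g := fun t => 1 - t + t^2/2 - t^3/6 + t^4/24 - Real.exp (-t))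
    (g' := fun t => (-1 + t - t^2/2 + t^3/6) + Real.exp (-t)) ?_ (by norm_num) ?_ t ht
  · linarith
  · intro x
    have h1 : HasDerivAt (fun t : ℝ => 1 - t + t^2/2 - t^3/6 + t^4/24)
        (-1 + x - x^2/2 + x^3/6) x := by
      have := ((((hasDerivAt_id x).const_sub 1).add ((hasDerivAt_pow 2 x).div_const 2)).sub
        ((hasDerivAt_pow 3 x).div_const 6)).add ((hasDerivAt_pow 4 x).div_const 24)
      exact this.congr_deriv (by push_cast; ring)
    have h2 : HasDerivAt (fun t : ℝ => Real.exp (-t)) (-Real.exp (-x)) x := by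
      have := ((hasDerivAt_id x).neg).exp
      exact this.congr_deriv (by simp)
    exact (h1.sub h2).congr_deriv (by ring)
  · intro x hx
    show 0 ≤ (-1 + x - x^2/2 + x^3/6) + Real.exp (-x)
    have := exp_lb3 hx
    linarith

lemma sqrt_twopi_lb : (2.5066:ℝ) < Real.sqrt (2 * Real.pi) := by
  have h : ((2.5066:ℝ))^2 < 2 * Real.pi := by nlinarith [Real.pi_gt_d6]
  nlinarith [Real.sq_sqrt (by positivity : (0:ℝ) ≤ 2 * Real.pi),
    Real.sqrt_nonneg (2 * Real.pi)]

lemma sqrt_twopi_ub : Real.sqrt (2 * Real.pi) < 2.50663 := by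
  have h : 2 * Real.pi < ((2.50663:ℝ))^2 := by nlinarith [Real.pi_lt_d6]
  nlinarith [Real.sq_sqrt (by positivity : (0:ℝ) ≤ 2 * Real.pi),
    Real.sqrt_nonneg (2 * Real.pi)]

lemma c_pos : 0 < (Real.sqrt (2 * Real.pi))⁻¹ := by
  have := sqrt_twopi_lb; positivity

lemma c_ub : (Real.sqrt (2 * Real.pi))⁻¹ ≤ 0.398947 := by
  have h := sqrt_twopi_lb
  have h2 : (Real.sqrt (2 * Real.pi))⁻¹ < (2.5066:ℝ)⁻¹ := by
    apply inv_strictAnti₀ (by norm_num) h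
  have : ((2.5066:ℝ))⁻¹ ≤ 0.398947 := by
    rw [inv_le_comm₀ (by norm_num) (by norm_num)]
    norm_num
  linarith

lemma c_lb : (0.398942:ℝ) ≤ (Real.sqrt (2 * Real.pi))⁻¹ := by
  have h := sqrt_twopi_ub
  have h0 : (0:ℝ) < Real.sqrt (2 * Real.pi) := by linarith [sqrt_twopi_lb]
  have h2 : ((2.50663:ℝ))⁻¹ < (Real.sqrt (2 * Real.pi))⁻¹ := inv_strictAnti₀ h0 h
  have : (0.398942:ℝ) ≤ ((2.50663:ℝ))⁻¹ := by
    rw [le_inv_comm₀ (by norm_num) (by norm_num)]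
    norm_num
  linarith

lemma antideriv_lb (x : ℝ) : HasDerivAt (fun x : ℝ => x - x^3/6 + x^5/40 - x^7/336)
    (1 - x^2/2 + x^4/8 - x^6/48) x := by
  have := ((((hasDerivAt_id x).sub ((hasDerivAt_pow 3 x).div_const 6)).add
    ((hasDerivAt_pow 5 x).div_const 40)).sub ((hasDerivAt_pow 7 x).div_const 336))
  exact this.congr_deriv (by push_cast; ring)

lemma antideriv_ub (x : ℝ) : HasDerivAt (fun x : ℝ => x - x^3/6 + x^5/40 - x^7/336 + x^9/3456)
    (1 - x^2/2 + x^4/8 - x^6/48 + x^8/384) x := by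
  have := (antideriv_lb x).add ((hasDerivAt_pow 9 x).div_const 3456)
  exact this.congr_deriv (by push_cast; ring)

lemma gauss_cont : Continuous (fun x : ℝ => Real.exp (-x^2/2)) := by fun_prop

lemma gauss_int_lb {a : ℝ} (ha : 0 ≤ a) :
    a - a^3/6 + a^5/40 - a^7/336 ≤ ∫ x in (0:ℝ)..a, Real.exp (-x^2/2) := by
  have hpoly : (∫ x in (0:ℝ)..a, (1 - x^2/2 + x^4/8 - x^6/48)) =
      a - a^3/6 + a^5/40 - a^7/336 := by
    rw [intervalIntegral.integral_eq_sub_of_hasDerivAt (fun x _ => antideriv_lb x)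
      ((by fun_prop : Continuous fun x : ℝ => 1 - x^2/2 + x^4/8 - x^6/48).intervalIntegrable 0 a)]
    norm_num
  rw [← hpoly]
  apply intervalIntegral.integral_mono_on ha
    ((by fun_prop : Continuous fun x : ℝ => 1 - x^2/2 + x^4/8 - x^6/48).intervalIntegrable 0 a)
    (gauss_cont.intervalIntegrable 0 a)
  intro x hx
  have ht : 0 ≤ x^2/2 := by positivity
  have h := exp_lb3 ht
  have he : Real.exp (-(x^2/2)) = Real.exp (-x^2/2) := by rw [neg_div]
  nlinarith [h]

lemma gauss_int_ub {a : ℝ} (ha : 0 ≤ a) :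
    (∫ x in (0:ℝ)..a, Real.exp (-x^2/2)) ≤ a - a^3/6 + a^5/40 - a^7/336 + a^9/3456 := by
  have hpoly : (∫ x in (0:ℝ)..a, (1 - x^2/2 + x^4/8 - x^6/48 + x^8/384)) =
      a - a^3/6 + a^5/40 - a^7/336 + a^9/3456 := by
    rw [intervalIntegral.integral_eq_sub_of_hasDerivAt (fun x _ => antideriv_ub x)
      ((by fun_prop :
        Continuous fun x : ℝ => 1 - x^2/2 + x^4/8 - x^6/48 + x^8/384).intervalIntegrable 0 a)]
    norm_num
  rw [← hpoly]
  apply intervalIntegral.integral_mono_on ha (gauss_cont.intervalIntegrable 0 a)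
    ((by fun_prop :
      Continuous fun x : ℝ => 1 - x^2/2 + x^4/8 - x^6/48 + x^8/384).intervalIntegrable 0 a)
  intro x hx
  have ht : 0 ≤ x^2/2 := by positivity
  have h := exp_ub4 ht
  have he : Real.exp (-(x^2/2)) = Real.exp (-x^2/2) := by rw [neg_div]
  nlinarith [h]

lemma F_formula (a : ℝ) : F a = a^3/2 +
    (Real.sqrt (2 * Real.pi))⁻¹ * (a^3 * (∫ x in (0:ℝ)..a, Real.exp (-x^2/2))
      - (1 - a^2) * Real.exp (-a^2/2)) := by
  have h1 : (∫ u in (0:ℝ)..a, stdPdf u) =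
      (Real.sqrt (2 * Real.pi))⁻¹ * ∫ x in (0:ℝ)..a, Real.exp (-x^2/2) := by
    rw [← intervalIntegral.integral_const_mul]
    rfl
  have h2 : stdPdf a = (Real.sqrt (2 * Real.pi))⁻¹ * Real.exp (-a^2/2) := rfl
  rw [F, stdCdf_eq, h1, h2]
  ring

lemma F_pos639 : 0 < F 0.639 := by
  set c : ℝ := (Real.sqrt (2 * Real.pi))⁻¹ with hc
  set I : ℝ := ∫ x in (0:ℝ)..(0.639:ℝ), Real.exp (-x^2/2) with hI
  set E : ℝ := Real.exp (-(0.639:ℝ)^2/2) with hE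
  have hFa : F 0.639 = (0.639:ℝ)^3/2 + c * ((0.639:ℝ)^3 * I - (1 - (0.639:ℝ)^2) * E) :=
    F_formula 0.639
  have hIlb : (0.598047:ℝ) ≤ I := by
    have := gauss_int_lb (a := (0.639:ℝ)) (by norm_num)
    rw [← hI] at this
    nlinarith [this]
  have hIub : I ≤ (0.5980478:ℝ) + (0.639:ℝ)^9/3456 := by
    have := gauss_int_ub (a := (0.639:ℝ)) (by norm_num)
    rw [← hI] at this
    nlinarith [this]
  have ht : (0:ℝ) ≤ (0.639:ℝ)^2/2 := by norm_num
  have hEub : E ≤ 0.8153345 := by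
    have h := exp_ub4 ht
    have he : Real.exp (-((0.639:ℝ)^2/2)) = E := by rw [hE, neg_div]
    rw [he] at h
    nlinarith [h]
  have hElb : (0.815:ℝ) ≤ E := by
    have h := exp_lb3 ht
    have he : Real.exp (-((0.639:ℝ)^2/2)) = E := by rw [hE, neg_div]
    rw [he] at h
    nlinarith [h]
  have hBlb : (-0.326376:ℝ) ≤ (0.639:ℝ)^3 * I - (1 - (0.639:ℝ)^2) * E := by
    nlinarith [hIlb, hEub]
  have hBub : (0.639:ℝ)^3 * I - (1 - (0.639:ℝ)^2) * E ≤ 0 := by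
    nlinarith [hIub, hElb]
  have hcc : c ≤ 0.398947 := c_ub
  have h3 : (0.398947:ℝ) * ((0.639:ℝ)^3 * I - (1 - (0.639:ℝ)^2) * E) ≤
      c * ((0.639:ℝ)^3 * I - (1 - (0.639:ℝ)^2) * E) :=
    mul_le_mul_of_nonpos_right hcc hBub
  nlinarith [hFa, h3, hBlb]

lemma F_neg638 : F 0.638 < 0 := by
  set c : ℝ := (Real.sqrt (2 * Real.pi))⁻¹ with hc
  set I : ℝ := ∫ x in (0:ℝ)..(0.638:ℝ), Real.exp (-x^2/2) with hI
  set E : ℝ := Real.exp (-(0.638:ℝ)^2/2) with hE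
  have hFa : F 0.638 = (0.638:ℝ)^3/2 + c * ((0.638:ℝ)^3 * I - (1 - (0.638:ℝ)^2) * E) :=
    F_formula 0.638
  have hIub : I ≤ (0.5972374:ℝ) := by
    have := gauss_int_ub (a := (0.638:ℝ)) (by norm_num)
    rw [← hI] at this
    nlinarith [this]
  have ht : (0:ℝ) ≤ (0.638:ℝ)^2/2 := by norm_num
  have hElb : (0.8157835:ℝ) ≤ E := by
    have h := exp_lb3 ht
    have he : Real.exp (-((0.638:ℝ)^2/2)) = E := by rw [hE, neg_div]
    rw [he] at h
    nlinarith [h]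
  have hBub : (0.638:ℝ)^3 * I - (1 - (0.638:ℝ)^2) * E ≤ -0.328624 := by
    nlinarith [hIub, hElb]
  have hcc : (0.398942:ℝ) ≤ c := c_lb
  have hBub0 : (0.638:ℝ)^3 * I - (1 - (0.638:ℝ)^2) * E ≤ 0 := by linarith
  have h3 : c * ((0.638:ℝ)^3 * I - (1 - (0.638:ℝ)^2) * E) ≤
      (0.398942:ℝ) * ((0.638:ℝ)^3 * I - (1 - (0.638:ℝ)^2) * E) :=
    mul_le_mul_of_nonpos_right hcc hBub0
  nlinarith [hFa, h3, hBub]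

theorem stmt5 :
    ∃ α : ℝ, α ∈ Set.Ioo (0.638 : ℝ) 0.639 ∧
      α ^ 3 * stdCdf α = (1 - α ^ 2) * stdPdf α ∧
      ∀ α' : ℝ, 0 < α' → α' ^ 3 * stdCdf α' = (1 - α' ^ 2) * stdPdf α' → α' = α := by
  have hcont : ContinuousOn F (Icc 0.638 0.639) :=
    fun x _ => (F_hasDeriv x).continuousAt.continuousWithinAt
  have hsub := intermediate_value_Ioo (by norm_num : (0.638:ℝ) ≤ 0.639) hcont
  have h0 : (0:ℝ) ∈ Ioo (F 0.638) (F 0.639) := ⟨F_neg638, F_pos639⟩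
  obtain ⟨α, hαIoo, hFα⟩ := hsub h0
  refine ⟨α, hαIoo, ?_, ?_⟩
  · have : α ^ 3 * stdCdf α - (1 - α ^ 2) * stdPdf α = 0 := hFα
    linarith
  · intro α' hα' heq
    have hF' : F α' = 0 := by rw [F]; linarith
    have hαmem : α ∈ Ici (0:ℝ) := le_of_lt (lt_trans (by norm_num) hαIoo.1)
    have hα'mem : α' ∈ Ici (0:ℝ) := le_of_lt hα'
    exact F_strictMono.injOn hα'mem hαmem (by rw [hF', hFα])
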